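/- Let s ≥ 1 be an integer, let 1 = q₀ > q₁ > ... > q_s > q_{s+1} = 0 be reals, and let 1 = k₀ < k₁ < ... < k_s = k be integers with k_{i+1}/k_i ∈ ℤ for every i. Let Q = Σ_{i=0}^{s} (q_i − q_{i+1}) (I_{k/k_i} ⊗ J_{k_i}) be the s-level ultrametric overlap matrix. Define c_{w1} = 1/(1 − q₁), S₁ = c_{w1}, and recursively for i = 1, ..., s: c_{w(i+1)} = −S_i² · ( 1/(q_i − q_{i+1}) + k_i S_i )^{−1} and S_{i+1} = S_i + k_i c_{w(i+1)}. Then Q is invertible and Q^{−1} = c_{w1} I_k + Σ_{i=1}^{s} c_{w(i+1)} (I_{k/k_i} ⊗ J_{k_i}). -/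

import Mathlib

/-- The `k × k` block-diagonal matrix `I_{k/ki} ⊗ J_{ki}` with `k/ki` diagonal blocks equal
to the `ki × ki` all-ones matrix. -/
def blockOnes (k ki : ℕ) : Matrix (Fin k) (Fin k) ℝ :=
  Matrix.of fun a b => if (a : ℕ) / ki = (b : ℕ) / ki then 1 else 0

open Matrix

lemma blockOnes_one (k : ℕ) : blockOnes k 1 = 1 := by
  ext a b
  simp [blockOnes, Matrix.one_apply, Nat.div_one, Fin.val_inj]

lemma card_block {k ki : ℕ} (hdvd : ki ∣ k) (hpos : 0 < ki) (a : Fin k) :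
    (Finset.univ.filter fun c : Fin k => (c : ℕ) / ki = (a : ℕ) / ki).card = ki := by
  have key : (Finset.univ.filter fun c : Fin k => (c : ℕ) / ki = (a : ℕ) / ki).card
      = (Finset.range ki).card := by
    refine Finset.card_bij' (fun c _ => (c : ℕ) % ki)
        (fun r hr => (⟨ki * ((a : ℕ) / ki) + r, ?_⟩ : Fin k)) ?_ ?_ ?_ ?_
    · have h1 : (a : ℕ) / ki < k / ki := Nat.div_lt_div_of_lt_of_dvd hdvd a.isLt
      have h2 : ((a : ℕ) / ki + 1) * ki ≤ k / ki * ki := Nat.mul_le_mul_right _ h1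
      have h3 : k / ki * ki = k := Nat.div_mul_cancel hdvd
      have := Finset.mem_range.mp hr
      nlinarith
    · intro c _
      exact Finset.mem_range.mpr (Nat.mod_lt _ hpos)
    · intro r hr
      simp only [Finset.mem_filter, Finset.mem_univ, true_and]
      have hrk := Finset.mem_range.mp hr
      rw [Nat.mul_add_div hpos, Nat.div_eq_of_lt hrk, add_zero]
    · intro c hc
      simp only [Finset.mem_filter, Finset.mem_univ, true_and] at hc
      apply Fin.ext
      simp only
      rw [← hc, Nat.div_add_mod]
    · intro r hr
      simp only
      have hrk := Finset.mem_range.mp hr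
      rw [Nat.mul_add_mod, Nat.mod_eq_of_lt hrk]
  simpa using key

lemma div_eq_of_div_eq {ki kj : ℕ} (hij : ki ∣ kj) {x y : ℕ} (h : x / ki = y / ki) :
    x / kj = y / kj := by
  obtain ⟨e, rfl⟩ := hij
  rw [← Nat.div_div_eq_div_mul, ← Nat.div_div_eq_div_mul, h]

lemma blockOnes_mul {k ki kj : ℕ} (hpos : 0 < ki) (hij : ki ∣ kj) (hjk : kj ∣ k) :
    blockOnes k ki * blockOnes k kj = (ki : ℝ) • blockOnes k kj := by
  ext a b
  simp only [Matrix.mul_apply, blockOnes, Matrix.smul_apply, Matrix.of_apply, smul_eq_mul]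
  by_cases hab : (a : ℕ) / kj = (b : ℕ) / kj
  · rw [if_pos hab, mul_one]
    have key : ∀ c : Fin k,
        (if (a : ℕ) / ki = (c : ℕ) / ki then (1 : ℝ) else 0) *
          (if (c : ℕ) / kj = (b : ℕ) / kj then 1 else 0)
        = if (c : ℕ) / ki = (a : ℕ) / ki then 1 else 0 := by
      intro c
      by_cases h : (a : ℕ) / ki = (c : ℕ) / ki
      · have h2 : (c : ℕ) / kj = (b : ℕ) / kj :=
          ((div_eq_of_div_eq hij h).symm).trans hab
        rw [if_pos h, if_pos h2, if_pos h.symm, one_mul]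
      · rw [if_neg h, zero_mul, if_neg fun hh => h hh.symm]
    rw [Finset.sum_congr rfl fun c _ => key c, Finset.sum_boole,
      card_block (dvd_trans hij hjk) hpos a]
  · rw [if_neg hab, mul_zero]
    apply Finset.sum_eq_zero
    intro c _
    by_cases h : (a : ℕ) / ki = (c : ℕ) / ki
    · rw [if_pos h, one_mul, if_neg]
      intro hh
      exact hab ((div_eq_of_div_eq hij h).trans hh)
    · rw [if_neg h, zero_mul]

lemma blockOnes_transpose (k ki : ℕ) : (blockOnes k ki)ᵀ = blockOnes k ki := by
  ext a b
  simp only [Matrix.transpose_apply, blockOnes, Matrix.of_apply]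
  exact if_congr eq_comm rfl rfl

lemma blockOnes_mul' {k ki kj : ℕ} (hpos : 0 < ki) (hij : ki ∣ kj) (hjk : kj ∣ k) :
    blockOnes k kj * blockOnes k ki = (ki : ℝ) • blockOnes k kj := by
  have h2 := congrArg Matrix.transpose (blockOnes_mul hpos hij hjk)
  rwa [Matrix.transpose_mul, blockOnes_transpose, blockOnes_transpose,
    Matrix.transpose_smul, blockOnes_transpose] at h2


theorem scalar_key (s : ℕ) (hs : 1 ≤ s) (q : ℕ → ℝ) (k : ℕ → ℕ)
    (hq0 : q 0 = 1) (hqdec : ∀ i ≤ s, q (i + 1) < q i)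
    (hk0 : k 0 = 1)
    (c S : ℕ → ℝ) (hc1 : c 1 = 1 / (1 - q 1)) (hS1 : S 1 = c 1)
    (hc : ∀ i, 1 ≤ i → i ≤ s →
      c (i + 1) = -S i ^ 2 * (1 / (q i - q (i + 1)) + (k i : ℝ) * S i)⁻¹)
    (hS : ∀ i, 1 ≤ i → i ≤ s → S (i + 1) = S i + (k i : ℝ) * c (i + 1)) :
    ∀ m, 1 ≤ m → m ≤ s →
      0 < S m ∧ S m * (∑ i ∈ Finset.range m, (q i - q (i + 1)) * (k i : ℝ)) = 1 ∧
        S m = ∑ j ∈ Finset.range m, (k j : ℝ) * c (j + 1) := by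
  have hq1 : q 1 < 1 := hq0 ▸ hqdec 0 (by omega)
  intro m
  induction m with
  | zero => omega
  | succ n ih =>
    intro _ hms
    rcases Nat.eq_zero_or_pos n with hn | hn
    · subst hn
      have h1q : (0:ℝ) < 1 - q 1 := by linarith
      refine ⟨?_, ?_, ?_⟩
      · rw [hS1, hc1]; positivity
      · rw [hS1, hc1, Finset.sum_range_one, hq0, hk0]
        push_cast
        field_simp
      · simp [hS1, hk0]
    · obtain ⟨h1, h2, h3⟩ := ih hn (by omega)
      have hns : n ≤ s := by omega
      have hdn : 0 < q n - q (n + 1) := sub_pos.mpr (hqdec n hns)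
      have hA : 0 < 1 / (q n - q (n + 1)) + (k n : ℝ) * S n := by
        have : (0:ℝ) ≤ (k n : ℝ) * S n := mul_nonneg (Nat.cast_nonneg _) h1.le
        have : (0:ℝ) < 1 / (q n - q (n + 1)) := by positivity
        linarith
      have hcn := hc n hn hns
      have hSn := hS n hn hns
      have hval : S (n + 1)
          = S n / ((q n - q (n + 1)) * (1 / (q n - q (n + 1)) + (k n : ℝ) * S n)) := by
        rw [hSn, hcn]
        field_simp
        ring
      have hT : (∑ i ∈ Finset.range n, (q i - q (i + 1)) * (k i : ℝ)) = 1 / S n :=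
        eq_one_div_of_mul_eq_one_left (by linarith [mul_comm (S n) (∑ i ∈ Finset.range n, (q i - q (i + 1)) * (k i : ℝ))])
      refine ⟨?_, ?_, ?_⟩
      · rw [hval]; positivity
      · rw [Finset.sum_range_succ, hT, hval]
        field_simp
      · rw [Finset.sum_range_succ, ← h3, ← hSn]

/-- for the `s`-level ultrametric overlap matrix
`Q = Σ_{i=0}^{s} (q_i - q_{i+1}) (I_{k/k_i} ⊗ J_{k_i})` and the recursively defined
coefficients `c_{w1} = 1/(1-q₁)`, `S₁ = c_{w1}`,
`c_{w(i+1)} = -S_i² (1/(q_i - q_{i+1}) + k_i S_i)⁻¹`, `S_{i+1} = S_i + k_i c_{w(i+1)}`,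
the matrix `Q` is invertible and
`Q⁻¹ = c_{w1} I_k + Σ_{i=1}^{s} c_{w(i+1)} (I_{k/k_i} ⊗ J_{k_i})`. -/
theorem stmt_11 (s : ℕ) (hs : 1 ≤ s) (q : ℕ → ℝ) (k : ℕ → ℕ)
    (hq0 : q 0 = 1) (hqlast : q (s + 1) = 0) (hqdec : ∀ i ≤ s, q (i + 1) < q i)
    (hk0 : k 0 = 1) (hkmono : ∀ i < s, k i < k (i + 1)) (hkdvd : ∀ i < s, k i ∣ k (i + 1))
    (c S : ℕ → ℝ) (hc1 : c 1 = 1 / (1 - q 1)) (hS1 : S 1 = c 1)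
    (hc : ∀ i, 1 ≤ i → i ≤ s →
      c (i + 1) = -S i ^ 2 * (1 / (q i - q (i + 1)) + (k i : ℝ) * S i)⁻¹)
    (hS : ∀ i, 1 ≤ i → i ≤ s → S (i + 1) = S i + (k i : ℝ) * c (i + 1))
    (Q : Matrix (Fin (k s)) (Fin (k s)) ℝ)
    (hQ : Q = ∑ i ∈ Finset.range (s + 1), (q i - q (i + 1)) • blockOnes (k s) (k i)) :
    IsUnit Q.det ∧
      Q⁻¹ = c 1 • (1 : Matrix (Fin (k s)) (Fin (k s)) ℝ) +
        ∑ i ∈ Finset.Icc 1 s, c (i + 1) • blockOnes (k s) (k i) := by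
  have hkpos : ∀ i ≤ s, 0 < k i := by
    intro i
    induction i with
    | zero => intro _; omega
    | succ n ih => intro h; have := hkmono n (by omega); have := ih (by omega); omega
  have hkd : ∀ i j, i ≤ j → j ≤ s → k i ∣ k j := by
    intro i j hij
    induction j with
    | zero => intro _; interval_cases i; exact dvd_rfl
    | succ n ih =>
      intro hns
      rcases Nat.lt_or_ge i (n + 1) with h | h
      · exact dvd_trans (ih (by omega) (by omega)) (hkdvd n (by omega))
      · have : i = n + 1 := by omega
        subst this; exact dvd_rfl
  have key := scalar_key s hs q k hq0 hqdec hk0 c S hc1 hS1 hc hS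
  have hq1 : q 1 < 1 := hq0 ▸ hqdec 0 (by omega)
  have hsplit : Finset.range (s + 1) = insert 0 (Finset.Icc 1 s) := by
    ext x
    simp only [Finset.mem_range, Finset.mem_insert, Finset.mem_Icc]
    omega
  have h0notin : (0 : ℕ) ∉ Finset.Icc 1 s := by simp
  set F : ℕ → ℕ → Matrix (Fin (k s)) (Fin (k s)) ℝ := fun i j =>
    ((q i - q (i + 1)) * c (j + 1) * (k (min i j) : ℝ)) • blockOnes (k s) (k (max i j))
    with hF
  have hQR : Q * (∑ j ∈ Finset.range (s + 1), c (j + 1) • blockOnes (k s) (k j)) = 1 := by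
    rw [hQ, Finset.sum_mul_sum]
    have hterm : ∀ i ∈ Finset.range (s + 1), ∀ j ∈ Finset.range (s + 1),
        ((q i - q (i + 1)) • blockOnes (k s) (k i)) * (c (j + 1) • blockOnes (k s) (k j))
        = F i j := by
      intro i hi j hj
      have hi' : i ≤ s := Nat.lt_succ_iff.mp (Finset.mem_range.mp hi)
      have hj' : j ≤ s := Nat.lt_succ_iff.mp (Finset.mem_range.mp hj)
      rcases le_total i j with h | h
      · simp only [hF, min_eq_left h, max_eq_right h]
        rw [Matrix.smul_mul, Matrix.mul_smul,
          blockOnes_mul (hkpos i hi') (hkd i j h hj') (hkd j s hj' le_rfl),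
          smul_smul, smul_smul]
      · simp only [hF, min_eq_right h, max_eq_left h]
        rw [Matrix.smul_mul, Matrix.mul_smul,
          blockOnes_mul' (hkpos j hj') (hkd j i h hi') (hkd i s hi' le_rfl),
          smul_smul, smul_smul]
    rw [Finset.sum_congr rfl fun i hi => Finset.sum_congr rfl fun j hj => hterm i hi j hj]
    have step1 : ∑ i ∈ Finset.range (s + 1), ∑ j ∈ Finset.range (s + 1), F i j
        = (∑ i ∈ Finset.range (s + 1), ∑ j ∈ Finset.range i, F i j)
          + ∑ i ∈ Finset.range (s + 1), ∑ j ∈ Finset.Ico i (s + 1), F i j := by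
      rw [← Finset.sum_add_distrib]
      refine Finset.sum_congr rfl fun i hi => ?_
      have hi' : i ≤ s + 1 := le_of_lt (Finset.mem_range.mp hi)
      rw [Finset.range_eq_Ico,
        ← Finset.sum_Ico_consecutive (fun j => F i j) (Nat.zero_le i) hi',
        ← Finset.range_eq_Ico]
    have step2 : ∑ i ∈ Finset.range (s + 1), ∑ j ∈ Finset.Ico i (s + 1), F i j
        = ∑ j ∈ Finset.range (s + 1), ∑ i ∈ Finset.range (j + 1), F i j := by
      rw [Finset.range_eq_Ico, Finset.sum_Ico_Ico_comm]
      simp only [Finset.range_eq_Ico]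
    have inner1 : ∀ i, ∑ j ∈ Finset.range i, F i j
        = ((q i - q (i + 1)) * ∑ j ∈ Finset.range i, (k j : ℝ) * c (j + 1)) •
            blockOnes (k s) (k i) := by
      intro i
      rw [Finset.mul_sum, Finset.sum_smul]
      refine Finset.sum_congr rfl fun j hj => ?_
      have hji : j ≤ i := le_of_lt (Finset.mem_range.mp hj)
      simp only [hF, min_eq_right hji, max_eq_left hji]
      congr 1
      ring
    have inner2 : ∀ j, ∑ i ∈ Finset.range (j + 1), F i j
        = ((∑ i ∈ Finset.range (j + 1), (q i - q (i + 1)) * (k i : ℝ)) * c (j + 1)) •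
            blockOnes (k s) (k j) := by
      intro j
      rw [Finset.sum_mul, Finset.sum_smul]
      refine Finset.sum_congr rfl fun i hi => ?_
      have hij : i ≤ j := Nat.lt_succ_iff.mp (Finset.mem_range.mp hi)
      simp only [hF, min_eq_left hij, max_eq_right hij]
      congr 1
      ring
    rw [step1, step2,
      Finset.sum_congr rfl fun i _ => inner1 i,
      Finset.sum_congr rfl fun j _ => inner2 j,
      ← Finset.sum_add_distrib]
    have combined : ∀ m, ((q m - q (m + 1)) * ∑ j ∈ Finset.range m, (k j : ℝ) * c (j + 1)) •
            blockOnes (k s) (k m)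
          + ((∑ i ∈ Finset.range (m + 1), (q i - q (i + 1)) * (k i : ℝ)) * c (m + 1)) •
            blockOnes (k s) (k m)
        = (((q m - q (m + 1)) * ∑ j ∈ Finset.range m, (k j : ℝ) * c (j + 1))
            + (∑ i ∈ Finset.range (m + 1), (q i - q (i + 1)) * (k i : ℝ)) * c (m + 1)) •
            blockOnes (k s) (k m) := fun m => (add_smul _ _ _).symm
    rw [Finset.sum_congr rfl fun m _ => combined m, hsplit, Finset.sum_insert h0notin]
    have hzero : ∀ m ∈ Finset.Icc 1 s,
        (((q m - q (m + 1)) * ∑ j ∈ Finset.range m, (k j : ℝ) * c (j + 1))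
            + (∑ i ∈ Finset.range (m + 1), (q i - q (i + 1)) * (k i : ℝ)) * c (m + 1)) •
            blockOnes (k s) (k m) = 0 := by
      intro m hm
      obtain ⟨hm1, hms⟩ := Finset.mem_Icc.mp hm
      obtain ⟨hSpos, hST, hSsum⟩ := key m hm1 hms
      have hdm : 0 < q m - q (m + 1) := sub_pos.mpr (hqdec m hms)
      have hA : 0 < 1 / (q m - q (m + 1)) + (k m : ℝ) * S m := by
        have h1 : (0:ℝ) ≤ (k m : ℝ) * S m := mul_nonneg (Nat.cast_nonneg _) hSpos.le
        have h2 : (0:ℝ) < 1 / (q m - q (m + 1)) := by positivity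
        linarith
      have hT : (∑ i ∈ Finset.range m, (q i - q (i + 1)) * (k i : ℝ)) = 1 / S m :=
        eq_one_div_of_mul_eq_one_left
          (by linarith [mul_comm (S m) (∑ i ∈ Finset.range m, (q i - q (i + 1)) * (k i : ℝ))])
      rw [← hSsum, Finset.sum_range_succ, hT, hc m hm1 hms]
      convert zero_smul ℝ _
      field_simp
      ring
    rw [Finset.sum_eq_zero hzero, add_zero]
    have hcoeff0 : ((q 0 - q (0 + 1)) * ∑ j ∈ Finset.range 0, (k j : ℝ) * c (j + 1))
          + (∑ i ∈ Finset.range (0 + 1), (q i - q (i + 1)) * (k i : ℝ)) * c (0 + 1) = 1 := by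
      rw [Finset.sum_range_zero, Finset.sum_range_one, hq0, hk0, hc1]
      push_cast
      have h1q : (1:ℝ) - q 1 ≠ 0 := ne_of_gt (by linarith)
      field_simp
      ring
    rw [hcoeff0, hk0, blockOnes_one, one_smul]
  refine ⟨Matrix.isUnit_det_of_right_inverse hQR, ?_⟩
  rw [Matrix.inv_eq_right_inv hQR, hsplit, Finset.sum_insert h0notin, hk0, blockOnes_one]
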